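/- Let m ≥ 4 be even and let q ∈ ℂ be a primitive m-th root of unity. Then for every integer N with m/2 < N < m there is no irreducible representation of U_q(sl(2)) of dimension N. -/

import Mathlib

open Matrix
noncomputable section

def endProd {V : Type*} [AddCommGroup V] [Module ℂ V] (T : Module.End ℂ V) (b : ℕ → ℂ) :
    ℕ → Module.End ℂ V
  | 0 => 1
  | n + 1 => (T - b (n + 1) • 1) * endProd T b n

lemma endProd_apply_eigen {V : Type*} [AddCommGroup V] [Module ℂ V]
    (T : Module.End ℂ V) (b : ℕ → ℂ) {x : V} {t : ℂ} (hx : T x = t • x) (n : ℕ) :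
    endProd T b n x = (∏ k ∈ Finset.Icc 1 n, (t - b k)) • x := by
  induction n with
  | zero => simp [endProd]
  | succ n ih =>
    rw [endProd, Module.End.mul_apply, ih, _root_.map_smul,
      Finset.prod_Icc_succ_top (Nat.le_add_left 1 n)]
    have : T x - b (n+1) • x = (t - b (n+1)) • x := by rw [hx, sub_smul]
    simp only [LinearMap.sub_apply, LinearMap.smul_apply, Module.End.one_apply, this,
      smul_smul, mul_comm]

lemma inv_span {N : ℕ} (A : Matrix (Fin N) (Fin N) ℂ) (s : Set (Fin N → ℂ))
    (h : ∀ x ∈ s, A.mulVec x ∈ Submodule.span ℂ s) :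
    ∀ v ∈ Submodule.span ℂ s, A.mulVec v ∈ Submodule.span ℂ s := by
  intro v hv
  have hle : Submodule.span ℂ s ≤ (Submodule.span ℂ s).comap A.mulVecLin :=
    Submodule.span_le.mpr (fun x hx => by
      simpa [Submodule.mem_comap, Matrix.mulVecLin_apply] using h x hx)
  simpa [Submodule.mem_comap, Matrix.mulVecLin_apply] using hle hv

lemma endProd_zero_on_span {V : Type*} [AddCommGroup V] [Module ℂ V]
    (g : Module.End ℂ V) (s : Set V) (h : ∀ x ∈ s, g x = 0) :
    ∀ v ∈ Submodule.span ℂ s, g v = 0 := by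
  intro v hv
  have hle : Submodule.span ℂ s ≤ LinearMap.ker g :=
    Submodule.span_le.mpr (fun x hx => LinearMap.mem_ker.mpr (h x hx))
  exact LinearMap.mem_ker.mp (hle hv)

/-- The q-integer `(p)_q = (q^p - q^{-p})/(q - q⁻¹)`. -/
def qint (q : ℂ) (p : ℤ) : ℂ := (q ^ p - q ^ (-p)) / (q - q⁻¹)

/-- A representation of `U_q(sl(2))` of dimension `N`: a triple `(K, E, F)` of `N×N`
complex matrices with `K` invertible satisfying the defining relations. -/
def IsRep (q : ℂ) {N : ℕ} (K E F : Matrix (Fin N) (Fin N) ℂ) : Prop :=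
  IsUnit K ∧
  K * E * K⁻¹ = q • E ∧
  K * F * K⁻¹ = q⁻¹ • F ∧
  E * F - F * E = (q - q⁻¹)⁻¹ • (K ^ 2 - K⁻¹ ^ 2)

/-- A subspace invariant under the three matrices `K`, `E`, `F`. -/
def InvariantSub {N : ℕ} (K E F : Matrix (Fin N) (Fin N) ℂ)
    (W : Submodule ℂ (Fin N → ℂ)) : Prop :=
  (∀ v ∈ W, K.mulVec v ∈ W) ∧ (∀ v ∈ W, E.mulVec v ∈ W) ∧ (∀ v ∈ W, F.mulVec v ∈ W)

/-- An irreducible representation of `U_q(sl(2))` of dimension `N`. -/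
def IsIrrep (q : ℂ) {N : ℕ} (K E F : Matrix (Fin N) (Fin N) ℂ) : Prop :=
  IsRep q K E F ∧ 1 ≤ N ∧
  ∀ W : Submodule ℂ (Fin N → ℂ), InvariantSub K E F W → W = ⊥ ∨ W = ⊤

theorem stmt9 (m : ℕ) (hm : 4 ≤ m) (heven : Even m) (q : ℂ) (hq : IsPrimitiveRoot q m)
    (N : ℕ) (hN1 : m / 2 < N) (hN2 : N < m)
    (K E F : Matrix (Fin N) (Fin N) ℂ) :
    ¬ IsIrrep q K E F := by
  rintro ⟨⟨hKu, hKE, hKF, hEF⟩, hN0, hirr⟩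
  -- basic numerology
  set e := m / 2 with he_def
  obtain ⟨m2, hm2⟩ := heven
  have he2 : 2 * e = m := by omega
  have he1 : 2 ≤ e := by omega
  have heltm : e < m := by omega
  have hm0 : m ≠ 0 := by omega
  -- root of unity facts
  have hq0 : q ≠ 0 := hq.ne_zero hm0
  have hqm : q ^ m = 1 := hq.pow_eq_one
  have hq2 : q ^ 2 ≠ 1 := hq.pow_ne_one_of_pos_of_lt (by norm_num) (by omega)
  have hr : IsPrimitiveRoot q⁻¹ m := hq.inv
  have hr0 : q⁻¹ ≠ 0 := inv_ne_zero hq0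
  -- matrix relations
  have hdetK : IsUnit K.det := (Matrix.isUnit_iff_isUnit_det K).mp hKu
  have hKK : K * K⁻¹ = 1 := Matrix.mul_nonsing_inv K hdetK
  have hKK' : K⁻¹ * K = 1 := Matrix.nonsing_inv_mul K hdetK
  have hKE' : K * E = q • (E * K) := by
    have h1 : K * E = K * E * K⁻¹ * K := by
      rw [Matrix.mul_assoc (K * E), hKK', Matrix.mul_one]
    rw [h1, hKE, Matrix.smul_mul]
  have hKF' : K * F = q⁻¹ • (F * K) := by
    have h1 : K * F = K * F * K⁻¹ * K := by
      rw [Matrix.mul_assoc (K * F), hKK', Matrix.mul_one]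
    rw [h1, hKF, Matrix.smul_mul]
  -- vector forms
  have hKEv : ∀ v, K.mulVec (E.mulVec v) = q • E.mulVec (K.mulVec v) := by
    intro v
    rw [Matrix.mulVec_mulVec, Matrix.mulVec_mulVec, hKE', Matrix.smul_mulVec,
      ← Matrix.mulVec_mulVec]
  have hKFv : ∀ v, K.mulVec (F.mulVec v) = q⁻¹ • F.mulVec (K.mulVec v) := by
    intro v
    rw [Matrix.mulVec_mulVec, Matrix.mulVec_mulVec, hKF', Matrix.smul_mulVec,
      ← Matrix.mulVec_mulVec]
  have hEFv : ∀ v, E.mulVec (F.mulVec v) = F.mulVec (E.mulVec v) +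
      (q - q⁻¹)⁻¹ • (K.mulVec (K.mulVec v) - K⁻¹.mulVec (K⁻¹.mulVec v)) := by
    intro v
    have h1 : E * F = F * E + (q - q⁻¹)⁻¹ • (K ^ 2 - K⁻¹ ^ 2) := by
      rw [← hEF]; abel
    have h2 := congrArg (fun M : Matrix (Fin N) (Fin N) ℂ => M.mulVec v) h1
    simp only [Matrix.add_mulVec, Matrix.smul_mulVec, Matrix.sub_mulVec, pow_two,
      ← Matrix.mulVec_mulVec] at h2
    exact h2
  -- the endomorphism T = K·
  set T : Module.End ℂ (Fin N → ℂ) := Matrix.mulVecLin K with hT_def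
  haveI : Nontrivial (Fin N → ℂ) := by
    refine ⟨0, fun _ => 1, fun h => ?_⟩
    have := congrFun h ⟨0, by omega⟩
    simp at this
  -- K is injective on vectors
  have hKinj : ∀ x : Fin N → ℂ, K.mulVec x = 0 → x = 0 := by
    intro x hx
    have : K⁻¹.mulVec (K.mulVec x) = x := by
      rw [Matrix.mulVec_mulVec, hKK', Matrix.one_mulVec]
    rw [hx, Matrix.mulVec_zero] at this
    exact this.symm
  -- eigenvalues of T are nonzero
  have heig_ne : ∀ (t : ℂ) (x : Fin N → ℂ), x ≠ 0 → K.mulVec x = t • x → t ≠ 0 := by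
    intro t x hx hKx ht
    rw [ht, zero_smul] at hKx
    exact hx (hKinj x hKx)
  -- existence of an eigenvalue
  obtain ⟨μ, hμ⟩ := Module.End.exists_eigenvalue T
  have hμ0 : μ ≠ 0 := by
    obtain ⟨x, hx⟩ := hμ.exists_hasEigenvector
    exact heig_ne μ x hx.right (by
      simpa [hT_def, Matrix.mulVecLin_apply] using Module.End.mem_eigenspace_iff.mp hx.left)
  -- find a "gap": an eigenvalue λ with qλ not an eigenvalue
  have hfinrank : Module.finrank ℂ (Fin N → ℂ) = N := Module.finrank_fin_fun ℂ
  have hgap : ∃ l : ℂ, l ≠ 0 ∧ T.HasEigenvalue l ∧ ¬ T.HasEigenvalue (q * l) := by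
    by_contra hcon
    push_neg at hcon
    have hall : ∀ j : ℕ, T.HasEigenvalue (q ^ j * μ) := by
      intro j
      induction j with
      | zero => simpa using hμ
      | succ p ih =>
        have h1 := hcon (q ^ p * μ) (fun h0 => hμ0 (by
          rcases mul_eq_zero.mp h0 with h | h
          · exact absurd h (pow_ne_zero p hq0)
          · exact h)) ih
        have : q * (q ^ p * μ) = q ^ (p + 1) * μ := by ring
        rwa [this] at h1
    choose x hx using fun j : Fin m => (hall j).exists_hasEigenvector
    have hinj : Function.Injective (fun j : Fin m => q ^ (j : ℕ) * μ) := by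
      intro i j hij
      exact Fin.ext (hq.pow_inj i.2 j.2 (mul_right_cancel₀ hμ0 hij))
    have hli := T.eigenvectors_linearIndependent' _ hinj x hx
    have := hli.fintype_card_le_finrank
    rw [hfinrank, Fintype.card_fin] at this
    omega
  obtain ⟨l, hl0, hleig, hlgap⟩ := hgap
  obtain ⟨v₀, hv₀⟩ := hleig.exists_hasEigenvector
  have hv₀0 : v₀ ≠ 0 := hv₀.right
  have hKv₀ : K.mulVec v₀ = l • v₀ := by
    simpa [hT_def, Matrix.mulVecLin_apply] using Module.End.mem_eigenspace_iff.mp hv₀.left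
  have hEv₀ : E.mulVec v₀ = 0 := by
    by_contra hne
    apply hlgap
    refine Module.End.hasEigenvalue_of_hasEigenvector (x := E.mulVec v₀) ?_
    refine ⟨Module.End.mem_eigenspace_iff.mpr ?_, hne⟩
    show K.mulVec (E.mulVec v₀) = (q * l) • (E.mulVec v₀)
    rw [hKEv, hKv₀, Matrix.mulVec_smul, smul_smul]
    -- the lowering chain
  set w : ℕ → (Fin N → ℂ) := fun p => (fun u => F.mulVec u)^[p] v₀ with hw_def
  have hw0 : w 0 = v₀ := rfl
  have hwsucc : ∀ p, w (p + 1) = F.mulVec (w p) := by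
    intro p; simp only [hw_def, Function.iterate_succ_apply']
  set r := q⁻¹ with hr_def
  have hKw : ∀ p, K.mulVec (w p) = (r ^ p * l) • w p := by
    intro p
    induction p with
    | zero => simpa [hw0] using hKv₀
    | succ p ih =>
      rw [hwsucc, hKFv, ih, Matrix.mulVec_smul, smul_smul, ← hwsucc]
      congr 1
      ring
  have hrl0 : ∀ p, r ^ p * l ≠ 0 := fun p => mul_ne_zero (pow_ne_zero p hr0) hl0
  have hKiw : ∀ p, K⁻¹.mulVec (w p) = (r ^ p * l)⁻¹ • w p := by
    intro p
    have h1 := congrArg (K⁻¹.mulVec) (hKw p)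
    rw [Matrix.mulVec_mulVec, hKK', Matrix.one_mulVec, Matrix.mulVec_smul] at h1
    calc K⁻¹.mulVec (w p) = (r ^ p * l)⁻¹ • ((r ^ p * l) • K⁻¹.mulVec (w p)) :=
          (inv_smul_smul₀ (hrl0 p) _).symm
      _ = (r ^ p * l)⁻¹ • w p := by rw [← h1]
  -- the scalars cₚ
  set d : ℕ → ℂ := fun i => (q - r)⁻¹ * ((r ^ i * l) ^ 2 - ((r ^ i * l)⁻¹) ^ 2) with hd_def
  set c : ℕ → ℂ := fun p => ∑ i ∈ Finset.range p, d i with hc_def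
  have hc0 : c 0 = 0 := by simp [hc_def]
  have hcsucc : ∀ p, c (p + 1) = c p + d p := fun p => Finset.sum_range_succ d p
  have hEw : ∀ p, E.mulVec (w p) = c p • w (p - 1) := by
    intro p
    induction p with
    | zero => rw [hw0, hEv₀, hc0, zero_smul]
    | succ p ih =>
      rw [hwsucc, hEFv, ih, Matrix.mulVec_smul]
      have hKKw : K.mulVec (K.mulVec (w p)) = ((r ^ p * l) ^ 2) • w p := by
        rw [hKw, Matrix.mulVec_smul, hKw, smul_smul, ← sq]
      have hKKiw : K⁻¹.mulVec (K⁻¹.mulVec (w p)) = (((r ^ p * l)⁻¹) ^ 2) • w p := by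
        rw [hKiw, Matrix.mulVec_smul, hKiw, smul_smul, ← sq]
      have hterm1 : c p • F.mulVec (w (p - 1)) = c p • w p := by
        cases p with
        | zero => rw [hc0, zero_smul, zero_smul]
        | succ t => rw [Nat.succ_sub_one, ← hwsucc]
      rw [hKKw, hKKiw, hterm1, ← sub_smul, smul_smul, ← add_smul, hcsucc,
        Nat.succ_sub_one]
  -- c e = 0
  have hce : c e = 0 := by
    have hq2e : (q ^ 2) ^ e = 1 := by rw [← pow_mul, he2, hqm]
    have hr2 : r ^ 2 ≠ 1 := by
      rw [hr_def, inv_pow]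
      intro h
      exact hq2 (by rw [← inv_inv (q ^ 2), h, inv_one])
    have hr2e : (r ^ 2) ^ e = 1 := by
      rw [← pow_mul, he2, hr_def, inv_pow, hqm, inv_one]
    have hgeom1 : ∑ i ∈ Finset.range e, (q ^ 2) ^ i = 0 := by
      rw [geom_sum_eq hq2, hq2e, sub_self, zero_div]
    have hgeom2 : ∑ i ∈ Finset.range e, (r ^ 2) ^ i = 0 := by
      rw [geom_sum_eq hr2, hr2e, sub_self, zero_div]
    have hdsplit : ∀ i, d i = ((q - r)⁻¹ * l ^ 2) * (r ^ 2) ^ i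
        - ((q - r)⁻¹ * (l⁻¹) ^ 2) * (q ^ 2) ^ i := by
      intro i
      have hri : (r ^ i)⁻¹ = q ^ i := by rw [hr_def, inv_pow, inv_inv]
      rw [hd_def]
      simp only []
      rw [mul_inv, hri]
      ring
    rw [hc_def]
    simp only []
    rw [Finset.sum_congr rfl (fun i _ => hdsplit i), Finset.sum_sub_distrib,
      ← Finset.mul_sum, ← Finset.mul_sum, hgeom1, hgeom2, mul_zero, mul_zero, sub_self]
  -- some wₚ vanishes before m
  have hvanish : ∃ p, p < m ∧ w p = 0 := by
    by_contra hcon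
    push_neg at hcon
    have hx : ∀ j : Fin m, T.HasEigenvector (r ^ (j : ℕ) * l) (w j) := fun j =>
      ⟨Module.End.mem_eigenspace_iff.mpr
          (by simpa [hT_def, Matrix.mulVecLin_apply] using hKw j), hcon j j.2⟩
    have hinj : Function.Injective (fun j : Fin m => r ^ (j : ℕ) * l) := fun i j hij =>
      Fin.ext (hr.pow_inj i.2 j.2 (mul_right_cancel₀ hl0 hij))
    have hli := T.eigenvectors_linearIndependent' _ hinj _ hx
    have := hli.fintype_card_le_finrank
    rw [hfinrank, Fintype.card_fin] at this
    omega
  have hex : ∃ p, w p = 0 := ⟨hvanish.choose, hvanish.choose_spec.2⟩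
  set n := Nat.find hex with hn_def
  have hwn : w n = 0 := Nat.find_spec hex
  have hnlt : ∀ k < n, w k ≠ 0 := fun k hk => Nat.find_min hex hk
  have hnm : n < m := lt_of_le_of_lt (Nat.find_le hvanish.choose_spec.2) hvanish.choose_spec.1
  have hwvan : ∀ p, n ≤ p → w p = 0 := by
    have haux : ∀ k, w (n + k) = 0 := by
      intro k
      induction k with
      | zero => simpa using hwn
      | succ t ih => rw [show n + (t + 1) = (n + t) + 1 by omega, hwsucc, ih, Matrix.mulVec_zero]
    intro p hp
    obtain ⟨k, rfl⟩ := Nat.exists_eq_add_of_le hp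
    exact haux k
  -- n must exceed e
  have hne : e < n := by
    by_contra hle
    push_neg at hle
    set W0 := Submodule.span ℂ (Set.range w) with hW0
    have hinv : InvariantSub K E F W0 := by
      refine ⟨inv_span K _ ?_, inv_span E _ ?_, inv_span F _ ?_⟩
      · rintro x ⟨p, rfl⟩
        rw [hKw]
        exact Submodule.smul_mem _ _ (Submodule.subset_span ⟨p, rfl⟩)
      · rintro x ⟨p, rfl⟩
        rw [hEw]
        exact Submodule.smul_mem _ _ (Submodule.subset_span ⟨p - 1, rfl⟩)
      · rintro x ⟨p, rfl⟩
        rw [← hwsucc]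
        exact Submodule.subset_span ⟨p + 1, rfl⟩
    rcases hirr W0 hinv with hbot | htop
    · have hv₀W : v₀ ∈ W0 := Submodule.subset_span ⟨0, hw0⟩
      rw [hbot] at hv₀W
      exact hv₀0 (by simpa using hv₀W)
    · classical
      set s : Finset (Fin N → ℂ) := (Finset.range n).image w with hs_def
      have hsub : Set.range w ⊆ ↑(Submodule.span ℂ (↑s : Set (Fin N → ℂ))) := by
        rintro x ⟨p, rfl⟩
        rcases Nat.lt_or_ge p n with h | h
        · exact Submodule.subset_span (by
            simp only [hs_def, Finset.coe_image, Finset.coe_range, Set.mem_image, Set.mem_Iio]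
            exact ⟨p, h, rfl⟩)
        · rw [hwvan p h]; exact Submodule.zero_mem _
      have htop2 : Submodule.span ℂ (↑s : Set (Fin N → ℂ)) = ⊤ :=
        top_unique (htop ▸ Submodule.span_le.mpr hsub)
      have h1 : Module.finrank ℂ (Submodule.span ℂ (↑s : Set (Fin N → ℂ))) = N := by
        rw [htop2, finrank_top, hfinrank]
      have h2 := finrank_span_finset_le_card (R := ℂ) s
      have h3 : s.card ≤ n := Finset.card_image_le.trans (by simp)
      rw [Set.finrank] at h2
      omega
  -- the invariant subspace spanned by wₚ, p ≥ e
  set gen : Set (Fin N → ℂ) := w '' Set.Ici e with hgen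
  set W := Submodule.span ℂ gen with hW
  have hwe : w e ∈ W := Submodule.subset_span ⟨e, le_refl e, rfl⟩
  have hinvW : InvariantSub K E F W := by
    refine ⟨inv_span K _ ?_, inv_span E _ ?_, inv_span F _ ?_⟩
    · rintro x ⟨p, hp, rfl⟩
      rw [hKw]
      exact Submodule.smul_mem _ _ (Submodule.subset_span ⟨p, hp, rfl⟩)
    · rintro x ⟨p, hp, rfl⟩
      rw [hEw]
      rcases eq_or_lt_of_le (Set.mem_Ici.mp hp) with heq | hlt
      · rw [← heq, hce, zero_smul]
        exact Submodule.zero_mem _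
      · exact Submodule.smul_mem _ _ (Submodule.subset_span ⟨p - 1, Set.mem_Ici.mpr (by omega), rfl⟩)
    · rintro x ⟨p, hp, rfl⟩
      rw [← hwsucc]
      exact Submodule.subset_span ⟨p + 1, by
        simp only [Set.mem_Ici] at hp ⊢; omega, rfl⟩
  rcases hirr W hinvW with hbot | htop
  · have := hbot ▸ hwe
    exact hnlt e hne (by simpa using this)
  · set b : ℕ → ℂ := fun k => r ^ k * l with hb_def
    set g := endProd T b (m - 1) with hg_def
    have hgw : ∀ x ∈ gen, g x = 0 := by
      rintro x ⟨p, hp, rfl⟩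
      have hp' : e ≤ p := hp
      rcases Nat.lt_or_ge p n with h | h
      · have hTx : T (w p) = (r ^ p * l) • w p := by
          simpa [hT_def, Matrix.mulVecLin_apply] using hKw p
        rw [hg_def, endProd_apply_eigen T b hTx]
        have hpm : p ∈ Finset.Icc 1 (m - 1) := Finset.mem_Icc.mpr ⟨by omega, by omega⟩
        rw [Finset.prod_eq_zero hpm (by simp [hb_def]), zero_smul]
      · rw [hwvan p h, map_zero]
    have hv₀W : v₀ ∈ W := htop ▸ Submodule.mem_top
    have hgv₀ : g v₀ = 0 := endProd_zero_on_span g gen hgw v₀ hv₀W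
    have hTv₀ : T v₀ = l • v₀ := by simpa [hT_def, Matrix.mulVecLin_apply] using hKv₀
    rw [hg_def, endProd_apply_eigen T b hTv₀] at hgv₀
    have hprod0 : (∏ k ∈ Finset.Icc 1 (m - 1), (l - b k)) ≠ 0 := by
      refine Finset.prod_ne_zero_iff.mpr (fun k hk => ?_)
      rw [Finset.mem_Icc] at hk
      intro h0
      have hsplit : (1 - r ^ k) * l = 0 := by
        have hb : b k = r ^ k * l := rfl
        rw [hb] at h0
        linear_combination h0
      rcases mul_eq_zero.mp hsplit with h | h
      · have hrk : r ^ k = 1 := by linear_combination -h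
        exact hr.pow_ne_one_of_pos_of_lt (show k ≠ 0 by omega) (show k < m by omega) hrk
      · exact hl0 h
    exact hv₀0 ((smul_eq_zero.mp hgv₀).resolve_left hprod0)
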